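/- Let f : ℝ^d → ℝ be μ-strongly convex and L-smooth with 0 < μ ≤ L, with minimizer x* and minimum value f*. Define Nesterov's constant step scheme II: choose x₀ ∈ ℝ^d and α₀ ∈ (0,1) satisfying L(1 − α₀) = α₀(α₀L − μ), set y₀ = x₀ and q = μ/L, and for k ≥ 0: x_{k+1} = y_k − (1/L)∇f(y_k); let α_{k+1} ∈ (0,1) be the root of α_{k+1}² = (1 − α_{k+1})α_k² + q·α_{k+1}; β_k = α_k(1 − α_k)/(α_k² + α_{k+1}); y_{k+1} = x_{k+1} + β_k(x_{k+1} − x_k). Then for every k ≥ 0, f(x_k) − f* ≤ L·(1 − √(μ/L))^k·‖x₀ − x*‖₂². -/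

import Mathlib

open RealInnerProductSpace

lemma quad_ub {d : ℕ} (f : EuclideanSpace ℝ (Fin d) → ℝ) (L : ℝ) (hL : 0 < L)
    (hdiff : Differentiable ℝ f)
    (hsmooth : ∀ x y : EuclideanSpace ℝ (Fin d),
      ‖gradient f x - gradient f y‖ ≤ L * ‖x - y‖) :
    ∀ x v : EuclideanSpace ℝ (Fin d),
      f (x + v) ≤ f x + ⟪gradient f x, v⟫ + L / 2 * ‖v‖ ^ 2 := by
  intro x v
  set g : ℝ → ℝ := fun t => f (x + t • v) - t * ⟪gradient f x, v⟫ - t ^ 2 * (L / 2) * ‖v‖ ^ 2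
    with hg
  have hline : ∀ t : ℝ, HasDerivAt (fun t : ℝ => x + t • v) v t := by
    intro t
    simpa using (HasDerivAt.const_add x (((hasDerivAt_id t).smul_const v)))
  have hder : ∀ t : ℝ, HasDerivAt g
      (⟪gradient f (x + t • v), v⟫ - ⟪gradient f x, v⟫ - 2 * t * (L / 2) * ‖v‖ ^ 2) t := by
    intro t
    have h1 : HasDerivAt (fun t : ℝ => f (x + t • v)) ⟪gradient f (x + t • v), v⟫ t := by
      have hf := (hdiff (x + t • v)).hasGradientAt
      have := hf.hasFDerivAt.comp_hasDerivAt t (hline t)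
      exact this
    have h2 : HasDerivAt (fun t : ℝ => t * ⟪gradient f x, v⟫) ⟪gradient f x, v⟫ t := by
      simpa using (hasDerivAt_id t).mul_const (⟪gradient f x, v⟫)
    have h3 : HasDerivAt (fun t : ℝ => t ^ 2 * (L / 2) * ‖v‖ ^ 2)
        (2 * t * (L / 2) * ‖v‖ ^ 2) t := by
      have := ((hasDerivAt_pow 2 t).mul_const (L / 2)).mul_const (‖v‖ ^ 2)
      simpa [mul_comm, mul_assoc, mul_left_comm] using this
    exact (h1.sub h2).sub h3
  have hanti : AntitoneOn g (Set.Icc 0 1) := by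
    apply antitoneOn_of_deriv_nonpos (convex_Icc (0:ℝ) 1)
    · exact (fun t _ => (hder t).continuousAt.continuousWithinAt)
    · exact fun t _ => (hder t).differentiableAt.differentiableWithinAt
    · intro t ht
      rw [interior_Icc] at ht
      rw [(hder t).deriv]
      have hcs : ⟪gradient f (x + t • v) - gradient f x, v⟫ ≤ L * t * ‖v‖ ^ 2 := by
        calc ⟪gradient f (x + t • v) - gradient f x, v⟫
            ≤ ‖gradient f (x + t • v) - gradient f x‖ * ‖v‖ := real_inner_le_norm _ _
          _ ≤ (L * ‖(x + t • v) - x‖) * ‖v‖ := by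
              gcongr; exact hsmooth _ _
          _ = L * (|t| * ‖v‖) * ‖v‖ := by simp [norm_smul, Real.norm_eq_abs]
          _ = L * t * ‖v‖ ^ 2 := by rw [abs_of_pos ht.1]; ring
      rw [inner_sub_left] at hcs
      nlinarith [hcs]
  have h01 := hanti (by norm_num : (0:ℝ) ∈ Set.Icc (0:ℝ) 1) (by norm_num : (1:ℝ) ∈ Set.Icc (0:ℝ) 1) zero_le_one
  simp only [hg] at h01
  simp only [zero_smul, add_zero, one_smul, zero_mul, sub_zero, zero_pow, one_mul, one_pow] at h01
  linarith

set_option maxHeartbeats 1000000 in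
lemma step_scalar (μ L a γ γ' fs fk fy fA Nu Nw Nv' Ng Iuw Iug Iwg Ikg Isg nky : ℝ)
    (hμ : 0 < μ) (hL : 0 < L) (ha0 : 0 < a) (ha1 : a < 1) (hγ : 0 < γ)
    (hG1 : γ' = (1 - a) * γ + a * μ) (hG2 : γ' = L * a ^ 2)
    (hnv : γ' ^ 2 * Nv' = ((1 - a) * γ) ^ 2 * Nu + (a * μ) ^ 2 * Nw + a ^ 2 * Ng
      + 2 * ((1 - a) * γ) * (a * μ) * Iuw - 2 * ((1 - a) * γ) * a * Iug
      - 2 * (a * μ) * a * Iwg)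
    (hF5 : (γ + a * μ) * (Iwg + Isg) = a * γ * (Iug + Isg) + γ' * Ikg)
    (h1 : fy - Iwg + μ / 2 * Nw ≤ fs)
    (h2 : fy + (Ikg - Iwg - Isg) + μ / 2 * nky ≤ fk)
    (h3 : 2 * L * fA ≤ 2 * L * fy - Ng)
    (h4 : 2 * Iuw ≤ Nu + Nw)
    (hnky : 0 ≤ nky) :
    fA - fs + γ' / 2 * Nv' ≤ (1 - a) * (fk - fs + γ / 2 * Nu) := by
  have ha1' : (0:ℝ) < 1 - a := by linarith
  have hγ'pos : (0:ℝ) < (1 - a) * γ + a * μ :=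
    add_pos (mul_pos ha1' hγ) (mul_pos ha0 hμ)
  subst hG1
  have h1m := mul_le_mul_of_nonneg_left h1
    (le_of_lt (by positivity : (0:ℝ) < 2 * L * ((1 - a) * γ + a * μ) * a))
  have h2m := mul_le_mul_of_nonneg_left h2
    (le_of_lt (by positivity : (0:ℝ) < 2 * L * ((1 - a) * γ + a * μ) * (1 - a)))
  have h3m := mul_le_mul_of_nonneg_left h3 hγ'pos.le
  have h4m := mul_le_mul_of_nonneg_left h4
    (le_of_lt (by positivity : (0:ℝ) < L * ((1 - a) * γ) * (a * μ)))
  have hnkym : (0:ℝ) ≤ L * ((1 - a) * γ + a * μ) * (1 - a) * μ * nky :=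
    mul_nonneg (le_of_lt (by positivity)) hnky
  have hnvm : L * (((1 - a) * γ + a * μ) ^ 2 * Nv')
      = L * (((1 - a) * γ) ^ 2 * Nu + (a * μ) ^ 2 * Nw + a ^ 2 * Ng
      + 2 * ((1 - a) * γ) * (a * μ) * Iuw - 2 * ((1 - a) * γ) * a * Iug
      - 2 * (a * μ) * a * Iwg) := by rw [hnv]
  have hF5m : 2 * L * (1 - a) * ((γ + a * μ) * (Iwg + Isg))
      = 2 * L * (1 - a) * (a * γ * (Iug + Isg) + ((1 - a) * γ + a * μ) * Ikg) := by rw [hF5]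
  have hG2m : Ng * ((1 - a) * γ + a * μ) = Ng * (L * a ^ 2) := by rw [← hG2]
  have key : 0 ≤ 2 * L * ((1 - a) * γ + a * μ) *
      ((1 - a) * (fk - fs + γ / 2 * Nu) - (fA - fs + ((1 - a) * γ + a * μ) / 2 * Nv')) := by
    linarith [h1m, h2m, h3m, h4m, hnkym, hnvm, hF5m, hG2m]
  have hpos : (0:ℝ) < 2 * L * ((1 - a) * γ + a * μ) := by positivity
  have h := (mul_nonneg_iff_of_pos_left hpos).mp key
  linarith

set_option maxHeartbeats 1000000 in
lemma nesterov_step {E : Type*} [NormedAddCommGroup E] [InnerProductSpace ℝ E]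
    (μ L a γ γ' : ℝ) (fs fk fy fA : ℝ) (g xstar xk yk vk xk1 vk1 : E)
    (hμ : 0 < μ) (hL : 0 < L) (ha0 : 0 < a) (ha1 : a < 1) (hγ : 0 < γ)
    (hG1 : γ' = (1 - a) * γ + a * μ) (hG2 : γ' = L * a ^ 2)
    (hxk1 : xk1 = yk - (1 / L) • g)
    (hvk1 : vk1 = xk + a⁻¹ • (xk1 - xk))
    (hR : (γ + a * μ) • yk = (a * γ) • vk + γ' • xk)
    (h1 : fy + ⟪g, xstar - yk⟫ + μ / 2 * ‖xstar - yk‖ ^ 2 ≤ fs)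
    (h2 : fy + ⟪g, xk - yk⟫ + μ / 2 * ‖xk - yk‖ ^ 2 ≤ fk)
    (h3 : 2 * L * fA ≤ 2 * L * fy - ‖g‖ ^ 2) :
    fA - fs + γ' / 2 * ‖vk1 - xstar‖ ^ 2 ≤ (1 - a) * (fk - fs + γ / 2 * ‖vk - xstar‖ ^ 2) := by
  have ha1' : (0:ℝ) < 1 - a := by linarith
  have hγ'pos : 0 < γ' := by rw [hG2]; positivity
  have hSpos : (0:ℝ) < γ + a * μ := add_pos hγ (mul_pos ha0 hμ)
  have hG2' : (1 - a) * γ + a * μ = L * a ^ 2 := by rw [← hG1, hG2]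
  have hyk0 : yk = (γ + a * μ)⁻¹ • ((a * γ) • vk + γ' • xk) := by
    rw [← hR, inv_smul_smul₀ hSpos.ne']
  have hyk : yk = ((γ + a * μ)⁻¹ * (a * γ)) • vk + ((γ + a * μ)⁻¹ * γ') • xk := by
    rw [hyk0, smul_add, smul_smul, smul_smul]
  have hA : γ' • (vk1 - xstar)
      = ((1 - a) * γ) • (vk - xstar) + (a * μ) • (yk - xstar) - a • g := by
    subst hG1
    have hLeq : L = ((1 - a) * γ + a * μ) / a ^ 2 := by
      field_simp at hG2' ⊢
      linarith [hG2']
    rw [hvk1, hxk1, hyk]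
    match_scalars <;> (try rw [hLeq]) <;> field_simp [ha0.ne', hSpos.ne'] <;> ring
  have hnorm : γ' ^ 2 * ‖vk1 - xstar‖ ^ 2
      = ‖((1 - a) * γ) • (vk - xstar) + (a * μ) • (yk - xstar) - a • g‖ ^ 2 := by
    rw [← hA, norm_smul, mul_pow, Real.norm_eq_abs, sq_abs]
  have hexp : ∀ P Q R : E, ‖P + Q - R‖ ^ 2
      = ‖P‖ ^ 2 + ‖Q‖ ^ 2 + ‖R‖ ^ 2 + 2 * ⟪P, Q⟫ - 2 * ⟪P, R⟫ - 2 * ⟪Q, R⟫ := by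
    intro P Q R
    rw [norm_sub_sq_real, norm_add_sq_real]
    simp only [inner_add_left]
    ring
  have hnv : γ' ^ 2 * ‖vk1 - xstar‖ ^ 2
      = ((1 - a) * γ) ^ 2 * ‖vk - xstar‖ ^ 2 + (a * μ) ^ 2 * ‖yk - xstar‖ ^ 2 + a ^ 2 * ‖g‖ ^ 2
      + 2 * ((1 - a) * γ) * (a * μ) * ⟪vk - xstar, yk - xstar⟫
      - 2 * ((1 - a) * γ) * a * ⟪vk - xstar, g⟫
      - 2 * (a * μ) * a * ⟪yk - xstar, g⟫ := by
    rw [hnorm, hexp]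
    simp only [real_inner_smul_left, real_inner_smul_right, norm_smul, mul_pow,
      Real.norm_eq_abs, sq_abs]
    ring
  have hF5I : (γ + a * μ) * ⟪yk, g⟫ = a * γ * ⟪vk, g⟫ + γ' * ⟪xk, g⟫ := by
    have := congrArg (fun z => (⟪z, g⟫ : ℝ)) hR
    simpa [inner_add_left, real_inner_smul_left] using this
  have hF5 : (γ + a * μ) * (⟪yk - xstar, g⟫ + ⟪xstar, g⟫)
      = a * γ * (⟪vk - xstar, g⟫ + ⟪xstar, g⟫) + γ' * ⟪xk, g⟫ := by
    simp only [inner_sub_left]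
    linarith [hF5I]
  have h1' : fy - ⟪yk - xstar, g⟫ + μ / 2 * ‖yk - xstar‖ ^ 2 ≤ fs := by
    have e1 : (⟪g, xstar - yk⟫ : ℝ) = -⟪yk - xstar, g⟫ := by
      rw [real_inner_comm]
      simp [inner_sub_left]
    have e2 : ‖xstar - yk‖ = ‖yk - xstar‖ := norm_sub_rev _ _
    rw [e1, e2] at h1
    linarith [h1]
  have h2' : fy + (⟪xk, g⟫ - ⟪yk - xstar, g⟫ - ⟪xstar, g⟫) + μ / 2 * ‖xk - yk‖ ^ 2 ≤ fk := by
    have e1 : (⟪g, xk - yk⟫ : ℝ) = ⟪xk, g⟫ - ⟪yk - xstar, g⟫ - ⟪xstar, g⟫ := by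
      rw [real_inner_comm]
      simp only [inner_sub_left]
      ring
    rw [e1] at h2
    linarith [h2]
  have h4 : 2 * ⟪vk - xstar, yk - xstar⟫ ≤ ‖vk - xstar‖ ^ 2 + ‖yk - xstar‖ ^ 2 := by
    have := sq_nonneg ‖(vk - xstar) - (yk - xstar)‖
    rw [norm_sub_sq_real] at this
    linarith
  exact step_scalar μ L a γ γ' fs fk fy fA (‖vk - xstar‖ ^ 2) (‖yk - xstar‖ ^ 2)
    (‖vk1 - xstar‖ ^ 2) (‖g‖ ^ 2) (⟪vk - xstar, yk - xstar⟫) (⟪vk - xstar, g⟫)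
    (⟪yk - xstar, g⟫) (⟪xk, g⟫) (⟪xstar, g⟫) (‖xk - yk‖ ^ 2)
    hμ hL ha0 ha1 hγ hG1 hG2 hnv hF5 h1' h2' h3 h4 (sq_nonneg _)

set_option maxHeartbeats 1000000 in
/-- **Nesterov's constant step scheme II** for a `μ`-strongly convex and `L`-smooth
function `f` on `ℝ^d`: `f (x k) - f* ≤ L * (1 - √(μ/L))^k * ‖x 0 - x*‖²`. -/
theorem nesterov_constant_step_scheme_II
    {d : ℕ} (f : EuclideanSpace ℝ (Fin d) → ℝ) (μ L : ℝ)
    (hμ : 0 < μ) (hμL : μ ≤ L)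
    (hdiff : Differentiable ℝ f)
    (hsc : ∀ x y : EuclideanSpace ℝ (Fin d),
      f x + ⟪gradient f x, y - x⟫ + μ / 2 * ‖y - x‖ ^ 2 ≤ f y)
    (hsmooth : ∀ x y : EuclideanSpace ℝ (Fin d),
      ‖gradient f x - gradient f y‖ ≤ L * ‖x - y‖)
    (xstar : EuclideanSpace ℝ (Fin d)) (hxstar : ∀ x, f xstar ≤ f x)
    (x y : ℕ → EuclideanSpace ℝ (Fin d)) (α : ℕ → ℝ)
    (hα0 : α 0 ∈ Set.Ioo (0 : ℝ) 1)
    (hα0eq : L * (1 - α 0) = α 0 * (α 0 * L - μ))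
    (hy0 : y 0 = x 0)
    (hx : ∀ k, x (k + 1) = y k - (1 / L) • gradient f (y k))
    (hα : ∀ k, α (k + 1) ∈ Set.Ioo (0 : ℝ) 1 ∧
      (α (k + 1)) ^ 2 = (1 - α (k + 1)) * (α k) ^ 2 + (μ / L) * α (k + 1))
    (hy : ∀ k, y (k + 1) = x (k + 1) +
      (α k * (1 - α k) / ((α k) ^ 2 + α (k + 1))) • (x (k + 1) - x k)) :
    ∀ k, f (x k) - f xstar ≤ L * (1 - Real.sqrt (μ / L)) ^ k * ‖x 0 - xstar‖ ^ 2 := by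
  have hL : 0 < L := lt_of_lt_of_le hμ hμL
  have ub : ∀ p z : EuclideanSpace ℝ (Fin d),
      f z ≤ f p + ⟪gradient f p, z - p⟫ + L / 2 * ‖z - p‖ ^ 2 := by
    intro p z
    simpa using quad_ub f L hL hdiff hsmooth p (z - p)
  -- descent lemma
  have descent : ∀ p : EuclideanSpace ℝ (Fin d),
      2 * L * f (p - (1 / L) • gradient f p) ≤ 2 * L * f p - ‖gradient f p‖ ^ 2 := by
    intro p
    have h := ub p (p - (1 / L) • gradient f p)
    have e1 : p - (1 / L) • gradient f p - p = -((1 / L) • gradient f p) := by abel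
    rw [e1] at h
    rw [inner_neg_right, real_inner_smul_right, real_inner_self_eq_norm_sq, norm_neg,
      norm_smul, Real.norm_eq_abs, abs_of_pos (by positivity : (0:ℝ) < 1 / L)] at h
    have h' : f (p - (1 / L) • gradient f p)
        ≤ f p - 1 / L * ‖gradient f p‖ ^ 2 + L / 2 * (1 / L) ^ 2 * ‖gradient f p‖ ^ 2 := by
      nlinarith [h]
    have e2 : L / 2 * (1 / L) ^ 2 = 1 / (2 * L) := by field_simp
    rw [e2] at h'
    have := mul_le_mul_of_nonneg_left h' (by positivity : (0:ℝ) ≤ 2 * L)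
    calc 2 * L * f (p - (1 / L) • gradient f p)
        ≤ 2 * L * (f p - 1 / L * ‖gradient f p‖ ^ 2 + 1 / (2 * L) * ‖gradient f p‖ ^ 2) := this
      _ = 2 * L * f p - 2 * (L * (1 / L)) * ‖gradient f p‖ ^ 2
          + (L * (1 / (2 * L) * 2)) * ‖gradient f p‖ ^ 2 := by ring
      _ = 2 * L * f p - ‖gradient f p‖ ^ 2 := by
          rw [mul_one_div_cancel hL.ne', mul_comm (1 / (2 * L)) 2, ← mul_assoc]
          rw [show L * 2 * (1 / (2 * L)) = 2 * L * (1 / (2 * L)) by ring,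
            mul_one_div_cancel (by positivity : (2 * L : ℝ) ≠ 0)]
          ring
  -- gradient at minimizer is zero
  have gstar : gradient f xstar = 0 := by
    have h := descent xstar
    have h2 := hxstar (xstar - (1 / L) • gradient f xstar)
    have h3 : ‖gradient f xstar‖ ^ 2 ≤ 0 := by nlinarith [h, h2]
    have : ‖gradient f xstar‖ = 0 := by nlinarith [sq_nonneg ‖gradient f xstar‖, norm_nonneg (gradient f xstar)]
    exact norm_eq_zero.mp this
  -- alpha facts
  have hαmem : ∀ k, α k ∈ Set.Ioo (0:ℝ) 1 := by
    intro k
    cases k with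
    | zero => exact hα0
    | succ k => exact (hα k).1
  -- gamma sequence
  set γ : ℕ → ℝ := fun n => Nat.casesOn n L (fun k => L * α k ^ 2) with hγdef
  have hγ0 : γ 0 = L := rfl
  have hγs : ∀ k, γ (k + 1) = L * α k ^ 2 := fun k => rfl
  have hG1 : ∀ k, γ (k + 1) = (1 - α k) * γ k + α k * μ := by
    intro k
    cases k with
    | zero =>
      rw [hγs, hγ0]
      nlinarith [hα0eq]
    | succ k =>
      rw [hγs, hγs]
      have h := (hα k).2
      have hLne : (L:ℝ) ≠ 0 := hL.ne'
      field_simp at h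
      nlinarith [h]
  have hγμ : ∀ k, μ ≤ γ k := by
    intro k
    induction k with
    | zero => exact hμL
    | succ k ih =>
      rw [hG1 k]
      have h0 := (hαmem k).1
      have h1 := (hαmem k).2
      nlinarith [ih]
  have hγpos : ∀ k, 0 < γ k := fun k => lt_of_lt_of_le hμ (hγμ k)
  -- sqrt facts
  have hsq : ∀ k, Real.sqrt (μ / L) ≤ α k := by
    intro k
    have h1 : μ / L ≤ α k ^ 2 := by
      rw [div_le_iff₀ hL]
      have := hγμ (k + 1)
      rw [hγs] at this
      nlinarith [this]
    calc Real.sqrt (μ / L) ≤ Real.sqrt (α k ^ 2) := Real.sqrt_le_sqrt h1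
      _ = α k := Real.sqrt_sq (hαmem k).1.le
  have hsq1 : Real.sqrt (μ / L) ≤ 1 := by
    have h : Real.sqrt (μ / L) ≤ Real.sqrt 1 := by
      apply Real.sqrt_le_sqrt
      rw [div_le_one hL]
      exact hμL
    simpa using h
  have hsqpos : 0 ≤ Real.sqrt (μ / L) := Real.sqrt_nonneg _
  -- v sequence
  set v : ℕ → EuclideanSpace ℝ (Fin d) :=
    fun n => Nat.casesOn n (x 0) (fun k => x k + (α k)⁻¹ • (x (k + 1) - x k)) with hvdef
  have hv0 : v 0 = x 0 := rfl
  have hvs : ∀ k, v (k + 1) = x k + (α k)⁻¹ • (x (k + 1) - x k) := fun k => rfl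
  -- the R invariant
  have hR : ∀ k, (γ k + α k * μ) • y k = (α k * γ k) • v k + γ (k + 1) • x k := by
    intro k
    induction k with
    | zero =>
      rw [hy0, hv0, hγ0, hγs]
      match_scalars
      linear_combination hα0eq
    | succ k ih =>
      rw [hy k, hvs k, hγs, hγs]
      have hA0 := (hαmem k).1
      have hA1 := (hαmem k).2
      have hB0 := (hαmem (k + 1)).1
      have hB1 := (hαmem (k + 1)).2
      have hden : (α k) ^ 2 + α (k + 1) ≠ 0 := by positivity
      have hrec : L * (α (k + 1)) ^ 2 = (1 - α (k + 1)) * (L * (α k) ^ 2) + μ * α (k + 1) := by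
        have h := (hα k).2
        field_simp at h
        nlinarith [h]
      match_scalars
      · field_simp
        linear_combination (-α k - α (k + 1)) * hrec
      · field_simp
        linear_combination (1 - α k) * hrec
  -- one step of the method
  have step : ∀ k, f (x (k + 1)) - f xstar + γ (k + 1) / 2 * ‖v (k + 1) - xstar‖ ^ 2
      ≤ (1 - α k) * (f (x k) - f xstar + γ k / 2 * ‖v k - xstar‖ ^ 2) := by
    intro k
    have h3 : 2 * L * f (x (k + 1)) ≤ 2 * L * f (y k) - ‖gradient f (y k)‖ ^ 2 := by
      rw [hx k]; exact descent (y k)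
    exact nesterov_step μ L (α k) (γ k) (γ (k + 1)) (f xstar) (f (x k)) (f (y k))
      (f (x (k + 1))) (gradient f (y k)) xstar (x k) (y k) (v k) (x (k + 1)) (v (k + 1))
      hμ hL (hαmem k).1 (hαmem k).2 (hγpos k) (hG1 k) (hγs k) (hx k) (hvs k) (hR k)
      (hsc (y k) xstar) (hsc (y k) (x k)) h3
  -- invariant
  have inv : ∀ k, f (x k) - f xstar + γ k / 2 * ‖v k - xstar‖ ^ 2
      ≤ (1 - Real.sqrt (μ / L)) ^ k * (f (x 0) - f xstar + L / 2 * ‖x 0 - xstar‖ ^ 2) := by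
    intro k
    induction k with
    | zero => simp [hv0, hγ0]
    | succ k ih =>
      have hΦ : 0 ≤ f (x k) - f xstar + γ k / 2 * ‖v k - xstar‖ ^ 2 := by
        have h1 := hxstar (x k)
        have h2 : 0 ≤ γ k / 2 * ‖v k - xstar‖ ^ 2 := by
          have := hγpos k
          positivity
        linarith
      calc f (x (k + 1)) - f xstar + γ (k + 1) / 2 * ‖v (k + 1) - xstar‖ ^ 2
          ≤ (1 - α k) * (f (x k) - f xstar + γ k / 2 * ‖v k - xstar‖ ^ 2) := step k
        _ ≤ (1 - Real.sqrt (μ / L)) * (f (x k) - f xstar + γ k / 2 * ‖v k - xstar‖ ^ 2) := by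
            apply mul_le_mul_of_nonneg_right _ hΦ
            linarith [hsq k]
        _ ≤ (1 - Real.sqrt (μ / L)) *
            ((1 - Real.sqrt (μ / L)) ^ k * (f (x 0) - f xstar + L / 2 * ‖x 0 - xstar‖ ^ 2)) := by
            apply mul_le_mul_of_nonneg_left ih
            linarith
        _ = (1 - Real.sqrt (μ / L)) ^ (k + 1)
            * (f (x 0) - f xstar + L / 2 * ‖x 0 - xstar‖ ^ 2) := by ring
  -- conclusion
  intro k
  have hΦ0 : f (x 0) - f xstar + L / 2 * ‖x 0 - xstar‖ ^ 2 ≤ L * ‖x 0 - xstar‖ ^ 2 := by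
    have h := ub xstar (x 0)
    rw [gstar] at h
    simp at h
    nlinarith [h]
  have hpow : 0 ≤ (1 - Real.sqrt (μ / L)) ^ k := by
    apply pow_nonneg
    linarith
  have h1 := inv k
  have h2 : (1 - Real.sqrt (μ / L)) ^ k * (f (x 0) - f xstar + L / 2 * ‖x 0 - xstar‖ ^ 2)
      ≤ (1 - Real.sqrt (μ / L)) ^ k * (L * ‖x 0 - xstar‖ ^ 2) :=
    mul_le_mul_of_nonneg_left hΦ0 hpow
  have h3 : 0 ≤ γ k / 2 * ‖v k - xstar‖ ^ 2 := by
    have := hγpos k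
    positivity
  calc f (x k) - f xstar ≤ f (x k) - f xstar + γ k / 2 * ‖v k - xstar‖ ^ 2 := by linarith
    _ ≤ (1 - Real.sqrt (μ / L)) ^ k * (L * ‖x 0 - xstar‖ ^ 2) := le_trans h1 h2
    _ = L * (1 - Real.sqrt (μ / L)) ^ k * ‖x 0 - xstar‖ ^ 2 := by ring
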